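/- Let f(v,δ) = [(v+1)(δ - sin δ) + 2√v (2 sin(δ/2) - δ cos(δ/2))] / (2 sin²(δ/2)). Then for all v ≥ 0 and 0 < δ ≤ π, f(v,δ) ≤ (π²/12)(v + √v + 1)δ. -/

import Mathlib

open Real

lemma le_of_deriv_le {f g f' g' : ℝ → ℝ}
    (hf : ∀ x, HasDerivAt f (f' x) x) (hg : ∀ x, HasDerivAt g (g' x) x)
    (h0 : f 0 ≤ g 0) (hle : ∀ x, 0 ≤ x → f' x ≤ g' x) :
    ∀ x, 0 ≤ x → f x ≤ g x := by
  intro x hx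
  have hmono : MonotoneOn (fun y => g y - f y) (Set.Ici 0) := by
    apply monotoneOn_of_deriv_nonneg (convex_Ici 0)
    · exact fun y _ => (((hg y).sub (hf y)).continuousAt).continuousWithinAt
    · intro y hy
      exact (((hg y).sub (hf y)).differentiableAt).differentiableWithinAt
    · intro y hy
      rw [interior_Ici] at hy
      rw [show (fun y => g y - f y) = g - f from rfl, ((hg y).sub (hf y)).deriv]
      linarith [hle y hy.le]
  have := hmono Set.self_mem_Ici hx hx
  simp only at this
  linarith

lemma hd3 (x : ℝ) : HasDerivAt (fun y : ℝ => y - y^3/6) (1 - x^2/2) x := by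
  have := (hasDerivAt_id x).sub ((hasDerivAt_pow 3 x).div_const 6)
  refine this.congr_deriv ?_
  norm_num
  ring

lemma hd4 (x : ℝ) : HasDerivAt (fun y : ℝ => 1 - y^2/2 + y^4/24) (-(x - x^3/6)) x := by
  have := (((hasDerivAt_pow 2 x).div_const 2).const_sub 1).add ((hasDerivAt_pow 4 x).div_const 24)
  refine this.congr_deriv ?_
  norm_num
  ring

lemma hd5 (x : ℝ) : HasDerivAt (fun y : ℝ => y - y^3/6 + y^5/120) (1 - x^2/2 + x^4/24) x := by
  have := (hd3 x).add ((hasDerivAt_pow 5 x).div_const 120)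
  refine this.congr_deriv ?_
  norm_num
  ring

lemma hd6 (x : ℝ) : HasDerivAt (fun y : ℝ => 1 - y^2/2 + y^4/24 - y^6/720)
    (-(x - x^3/6 + x^5/120)) x := by
  have := (hd4 x).sub ((hasDerivAt_pow 6 x).div_const 720)
  refine this.congr_deriv ?_
  norm_num
  ring

lemma hd7 (x : ℝ) : HasDerivAt (fun y : ℝ => y - y^3/6 + y^5/120 - y^7/5040)
    (1 - x^2/2 + x^4/24 - x^6/720) x := by
  have := (hd5 x).sub ((hasDerivAt_pow 7 x).div_const 5040)
  refine this.congr_deriv ?_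
  norm_num
  ring

lemma sin3 : ∀ x : ℝ, 0 ≤ x → x - x^3/6 ≤ Real.sin x := by
  apply le_of_deriv_le hd3 (fun x => Real.hasDerivAt_sin x)
  · norm_num
  · exact fun x _ => Real.one_sub_sq_div_two_le_cos

lemma cos4 : ∀ x : ℝ, 0 ≤ x → Real.cos x ≤ 1 - x^2/2 + x^4/24 := by
  apply le_of_deriv_le (fun x => Real.hasDerivAt_cos x) hd4
  · norm_num
  · exact fun x hx => by linarith [sin3 x hx]

lemma sin5 : ∀ x : ℝ, 0 ≤ x → Real.sin x ≤ x - x^3/6 + x^5/120 := by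
  apply le_of_deriv_le (fun x => Real.hasDerivAt_sin x) hd5
  · norm_num
  · exact fun x hx => cos4 x hx

lemma cos6 : ∀ x : ℝ, 0 ≤ x → 1 - x^2/2 + x^4/24 - x^6/720 ≤ Real.cos x := by
  apply le_of_deriv_le hd6 (fun x => Real.hasDerivAt_cos x)
  · norm_num
  · exact fun x hx => by linarith [sin5 x hx]

lemma sin7 : ∀ x : ℝ, 0 ≤ x → x - x^3/6 + x^5/120 - x^7/5040 ≤ Real.sin x := by
  apply le_of_deriv_le hd7 (fun x => Real.hasDerivAt_sin x)
  · norm_num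
  · exact fun x hx => cos6 x hx



lemma pisq_lb : (9.8696 : ℝ) < π^2 := by nlinarith [Real.pi_gt_d6]
lemma pisq_ub : π^2 < (9.8697 : ℝ) := by nlinarith [Real.pi_lt_d6, Real.pi_gt_d6]

lemma qA (t : ℝ) (ht0 : 0 ≤ t) (ht : t ≤ π^2/4) :
    0 ≤ (π^2/3 - 4/3) + (4/15 - π^2/9)*t + (π^2/108 - 8/315)*t^2 := by
  have h1 := pisq_lb; have h2 := pisq_ub
  nlinarith [mul_nonneg ht0 ht0, mul_nonneg (sub_nonneg.2 ht) ht0, sq_nonneg (t - 5/2)]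

lemma qB (t : ℝ) (ht0 : 0 ≤ t) (ht : t ≤ π^2/4) :
    0 ≤ (π^2/12 - 1/3) + (1/30 - π^2/36)*t + (π^2/432 - 1/720)*t^2 := by
  have h1 := pisq_lb; have h2 := pisq_ub
  nlinarith [mul_nonneg ht0 ht0, mul_nonneg (sub_nonneg.2 ht) ht0, sq_nonneg (t - 5/2)]

lemma sinsq_lb (x : ℝ) (hx : 0 ≤ x) (hx2 : x ≤ π/2) :
    (x - x^3/6)^2 ≤ Real.sin x ^ 2 := by
  have h := sin3 x hx
  have hπ : π < 3.15 := by linarith [Real.pi_lt_d6]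
  have hxb : x ≤ 1.575 := by linarith
  have hx2b : x^2 ≤ 6 := by nlinarith
  have h0 : 0 ≤ x - x^3/6 := by nlinarith [mul_nonneg hx (sub_nonneg.2 hx2b)]
  nlinarith

lemma claimA (x : ℝ) (hx : 0 < x) (hx2 : x ≤ π/2) :
    2*x - Real.sin (2*x) ≤ π^2/3 * x * Real.sin x ^ 2 := by
  have h7 := sin7 (2*x) (by linarith)
  have hsq := sinsq_lb x hx.le hx2
  have ht : x^2 ≤ π^2/4 := by nlinarith
  have hq := qA (x^2) (sq_nonneg x) ht
  have hxq := mul_nonneg hx.le hq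
  have hmul := mul_le_mul_of_nonneg_left hsq (show (0:ℝ) ≤ π^2/3 * x by positivity)
  nlinarith [hmul, h7, hxq]

lemma claimB (x : ℝ) (hx : 0 < x) (hx2 : x ≤ π/2) :
    Real.sin x - x * Real.cos x ≤ π^2/12 * x * Real.sin x ^ 2 := by
  have h5 := sin5 x hx.le
  have h6 := cos6 x hx.le
  have h6' := mul_le_mul_of_nonneg_left h6 hx.le
  have hsq := sinsq_lb x hx.le hx2
  have ht : x^2 ≤ π^2/4 := by nlinarith
  have hq := qB (x^2) (sq_nonneg x) ht
  have hxq := mul_nonneg hx.le hq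
  have hmul := mul_le_mul_of_nonneg_left hsq (show (0:ℝ) ≤ π^2/12 * x by positivity)
  nlinarith [hmul, hxq]

theorem f_upper_bound_close (v δ : ℝ) (hv : 0 ≤ v) (h1 : 0 < δ) (h2 : δ ≤ π) :
    ((v + 1) * (δ - Real.sin δ)
      + 2 * Real.sqrt v * (2 * Real.sin (δ/2) - δ * Real.cos (δ/2)))
      / (2 * Real.sin (δ/2)^2)
    ≤ π^2 / 12 * (v + Real.sqrt v + 1) * δ := by
  have hx : 0 < δ/2 := by linarith
  have hx2 : δ/2 ≤ π/2 := by linarith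
  have hπ := Real.pi_pos
  have hs : 0 < Real.sin (δ/2) := Real.sin_pos_of_pos_of_lt_pi hx (by linarith)
  have hden : 0 < 2 * Real.sin (δ/2)^2 := by positivity
  rw [div_le_iff₀ hden]
  have hA' : δ - Real.sin δ ≤ π^2/6 * δ * Real.sin (δ/2)^2 := by
    have h := claimA (δ/2) hx hx2
    have h2' : 2*(δ/2) = δ := by ring
    rw [h2'] at h
    linarith
  have hB := claimB (δ/2) hx hx2
  have t1 := mul_le_mul_of_nonneg_left hA' (show (0:ℝ) ≤ v + 1 by linarith)
  have t2 := mul_le_mul_of_nonneg_left hB (Real.sqrt_nonneg v)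
  linarith [t1, t2]
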